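/- The series ∑_{k=1}^∞ (1/k²) · C(2k,k) / 4^k equals ζ(2) − 2·(ln 2)². -/

import Mathlib

open scoped BigOperators
open Real Filter Topology

noncomputable def cb (k : ℕ) : ℝ := (Nat.choose (2*k) k : ℝ) / 4^k

noncomputable def H (k : ℕ) : ℝ := ∑ j ∈ Finset.range k, (1:ℝ)/(j+1)

noncomputable def oh (k : ℕ) : ℝ := ∑ j ∈ Finset.range k, (1:ℝ)/(2*j+1)

lemma cb_zero : cb 0 = 1 := by simp [cb]
lemma cb_one : cb 1 = 1/2 := by norm_num [cb]

lemma cb_pos (k : ℕ) : 0 < cb k := by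
  apply div_pos _ (by positivity)
  exact_mod_cast Nat.cast_pos.mpr (Nat.choose_pos (by omega))

lemma cb_rec (k : ℕ) : 2 * ((k:ℝ)+1) * cb (k+1) = (2*(k:ℝ)+1) * cb k := by
  have h := Nat.succ_mul_centralBinom_succ k
  have h2 : ∀ n : ℕ, Nat.centralBinom n = Nat.choose (2*n) n := fun n => rfl
  rw [h2, h2] at h
  have h' : ((k:ℝ)+1) * (Nat.choose (2*(k+1)) (k+1) : ℝ) = 2 * (2*(k:ℝ)+1) * (Nat.choose (2*k) k : ℝ) := by
    exact_mod_cast congrArg (Nat.cast : ℕ → ℝ) h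
  have h4 : (4:ℝ)^(k+1) = 4 * 4^k := by ring
  unfold cb
  rw [h4]
  field_simp
  nlinarith [h', pow_pos (show (0:ℝ) < 4 by norm_num) k]

lemma cb_le_one (k : ℕ) : cb k ≤ 1 := by
  induction k with
  | zero => simp [cb_zero]
  | succ n ih =>
    have h := cb_rec n
    have hp := cb_pos n
    nlinarith [cb_pos (n+1)]

lemma summable_pow_of_abs_le_one {c : ℕ → ℝ} (hc : ∀ k, |c k| ≤ 1) {x : ℝ} (hx : |x| < 1) :
    Summable (fun k => c k * x ^ k) := by
  apply Summable.of_norm_bounded (summable_geometric_of_lt_one (abs_nonneg x) hx)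
  intro k
  rw [Real.norm_eq_abs, abs_mul, abs_pow]
  calc |c k| * |x| ^ k ≤ 1 * |x| ^ k := by gcongr; exact hc k
    _ = |x| ^ k := one_mul _

lemma hasDerivAt_tsum_pow {c : ℕ → ℝ} (hc : ∀ k, |c k| ≤ 1) {x : ℝ} (hx : |x| < 1) :
    HasDerivAt (fun y => ∑' k, c k * y ^ k) (∑' k, c k * ((k:ℝ) * x ^ (k-1))) x := by
  set r : ℝ := (1 + |x|) / 2 with hrdef
  have hr0 : 0 < r := by positivity
  have hrx : |x| < r := by rw [hrdef]; linarith
  have hr1 : r < 1 := by rw [hrdef]; linarith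
  have hu : Summable (fun k : ℕ => (k:ℝ) * r ^ k / r) := by
    apply Summable.div_const
    have := summable_pow_mul_geometric_of_norm_lt_one (R := ℝ) 1
      (by rwa [Real.norm_eq_abs, abs_of_pos hr0] : ‖r‖ < 1)
    exact this.congr (fun k => by push_cast; ring)
  have hmem : ∀ y : ℝ, |y| < r → y ∈ Metric.ball (0:ℝ) r := by
    intro y hy; simpa [Metric.mem_ball, Real.dist_eq] using hy
  refine hasDerivAt_tsum_of_isPreconnected hu Metric.isOpen_ball
    (convex_ball (0:ℝ) r).isPreconnected
    (fun k y _ => ((hasDerivAt_pow k y).const_mul (c k)))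
    (fun k y hy => ?_) (hmem 0 (by simpa using hr0))
    (summable_pow_of_abs_le_one hc (by simpa using zero_lt_one)) (hmem x hrx)
  have hyr : |y| < r := by simpa [Metric.mem_ball, Real.dist_eq] using hy
  rw [Real.norm_eq_abs, abs_mul, abs_mul, abs_pow]
  rcases Nat.eq_zero_or_pos k with rfl | hk
  · simp [hr0.le]
  · have hpow : |y| ^ (k-1) ≤ r ^ (k-1) := by gcongr
    have h1 : |c k| * (|(k:ℝ)| * |y|^(k-1)) ≤ (k:ℝ) * r^(k-1) := by
      rw [Nat.abs_cast]
      calc |c k| * ((k:ℝ) * |y|^(k-1)) ≤ 1 * ((k:ℝ) * r^(k-1)) := by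
            gcongr
            exact hc k
        _ = (k:ℝ) * r^(k-1) := one_mul _
    have h2 : (k:ℝ) * r^(k-1) = (k:ℝ) * r ^ k / r := by
      rw [mul_div_assoc]
      congr 1
      rw [eq_div_iff hr0.ne']
      rw [← pow_succ]
      congr 1
      omega
    linarith

lemma hasDerivAt_tsum_pow' {c : ℕ → ℝ} (hc : ∀ k, |c k| ≤ 1) {x d : ℝ} (hx : |x| < 1)
    (hd : HasSum (fun k => c (k+1) * ((k:ℝ)+1) * x ^ k) d) :
    HasDerivAt (fun y => ∑' k, c k * y ^ k) d x := by
  have h0 : HasSum (fun k => c k * ((k:ℝ) * x ^ (k-1))) d := by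
    refine (hasSum_nat_add_iff' 1).mp ?_
    simpa [mul_assoc] using hd
  exact h0.tsum_eq ▸ hasDerivAt_tsum_pow hc hx

lemma hasSum_shift {c : ℕ → ℝ} {x a : ℝ} (h : HasSum (fun k => c (k+1) * x ^ k) a) :
    HasSum (fun k => c k * x ^ k) (c 0 + x * a) := by
  have h2 : HasSum (fun k => c (k+1) * x ^ (k+1)) (x * a) := by
    have := h.mul_left x
    refine this.congr_fun fun k => by ring
  refine (hasSum_nat_add_iff' 1).mp ?_
  simpa [add_comm] using h2

noncomputable def Fs (x : ℝ) : ℝ := ∑' k, cb k * x ^ k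
noncomputable def DF (x : ℝ) : ℝ := ∑' k, cb (k+1) * ((k:ℝ)+1) * x ^ k

lemma hcb_abs : ∀ k, |cb k| ≤ 1 := fun k => by
  rw [abs_of_pos (cb_pos k)]; exact cb_le_one k

lemma summable_DF {x : ℝ} (hx : |x| < 1) :
    Summable (fun k => cb (k+1) * ((k:ℝ)+1) * x ^ k) := by
  have hg : Summable (fun k : ℕ => ((k:ℝ)+1) * |x| ^ k) := by
    have h1 := summable_pow_mul_geometric_of_norm_lt_one (R := ℝ) 1
      (by rwa [Real.norm_eq_abs, abs_abs] : ‖|x|‖ < 1)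
    have h2 := summable_geometric_of_lt_one (abs_nonneg x) hx
    have := h1.add h2
    refine this.congr fun k => by push_cast; ring
  refine Summable.of_norm_bounded hg fun k => ?_
  rw [Real.norm_eq_abs, abs_mul, abs_mul, abs_pow]
  have h1 : |cb (k+1)| ≤ 1 := hcb_abs _
  have h2 : |(k:ℝ)+1| = (k:ℝ)+1 := abs_of_pos (by positivity)
  rw [h2]
  calc |cb (k+1)| * ((k:ℝ)+1) * |x|^k ≤ 1 * ((k:ℝ)+1) * |x|^k := by gcongr
    _ = ((k:ℝ)+1) * |x|^k := by ring

lemma hasSum_Fs {x : ℝ} (hx : |x| < 1) : HasSum (fun k => cb k * x ^ k) (Fs x) :=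
  (summable_pow_of_abs_le_one hcb_abs hx).hasSum

lemma hasDerivAt_Fs {x : ℝ} (hx : |x| < 1) : HasDerivAt Fs (DF x) x :=
  hasDerivAt_tsum_pow' hcb_abs hx (summable_DF hx).hasSum

lemma ode_Fs {x : ℝ} (hx : |x| < 1) : 2 * (1-x) * DF x = Fs x := by
  have hDF := (summable_DF hx).hasSum
  have h2 : HasSum (fun k : ℕ => (2*(k:ℝ)+1) * cb k * x ^ k) (2 * DF x) := by
    refine (hDF.mul_left 2).congr_fun fun k => ?_
    rw [← cb_rec k]; ring
  have hx2 : HasSum (fun k : ℕ => (2*((k:ℝ)+1)) * cb (k+1) * x ^ (k+1)) (2 * x * DF x) := by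
    refine (hDF.mul_left (2*x)).congr_fun fun k => by ring
  have hg : HasSum (fun k : ℕ => (2*(k:ℝ)) * cb k * x ^ k) (2 * x * DF x) := by
    refine (hasSum_nat_add_iff' 1).mp ?_
    simpa using hx2.congr_fun fun k => by push_cast; ring
  have hsub := h2.sub hg
  have : HasSum (fun k => cb k * x ^ k) (2 * DF x - 2 * x * DF x) := by
    refine hsub.congr_fun fun k => by ring
  have := (hasSum_Fs hx).unique this
  linarith

lemma eq_at_zero_of_deriv_zero {f : ℝ → ℝ} {b : ℝ} (hb : b ∈ Set.Ico (0:ℝ) 1)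
    (hf : ∀ x ∈ Set.Ico (0:ℝ) 1, HasDerivAt f 0 x) : f b = f 0 := by
  rcases eq_or_lt_of_le hb.1 with h0b | h0b
  · rw [← h0b]
  · exact constant_of_has_deriv_right_zero (f := f) (a := 0) (b := b)
      (fun x hx => (hf x ⟨hx.1, lt_of_le_of_lt hx.2 hb.2⟩).continuousAt.continuousWithinAt)
      (fun x hx => (hf x ⟨hx.1, lt_trans hx.2 hb.2⟩).hasDerivWithinAt) b ⟨hb.1, le_refl b⟩

lemma tsum_pow_zero (c : ℕ → ℝ) : ∑' k, c k * (0:ℝ) ^ k = c 0 := by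
  rw [tsum_eq_single 0]
  · simp
  · intro b hb; simp [zero_pow hb]

lemma abs_lt_one_of_Ico {x : ℝ} (hx : x ∈ Set.Ico (0:ℝ) 1) : |x| < 1 := by
  rw [abs_of_nonneg hx.1]; exact hx.2

lemma Fs_zero : Fs 0 = 1 := by
  rw [Fs, tsum_pow_zero, cb_zero]

lemma Fs_sq {b : ℝ} (hb : b ∈ Set.Ico (0:ℝ) 1) : (1-b) * Fs b ^ 2 = 1 := by
  have h := eq_at_zero_of_deriv_zero (f := fun x => (1-x) * Fs x ^ 2) hb ?_
  · simpa [Fs_zero] using h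
  · intro x hx
    have hx1 := abs_lt_one_of_Ico hx
    have hd := ((hasDerivAt_id x).const_sub (1:ℝ)).mul ((hasDerivAt_Fs hx1).pow 2)
    simp only [id_eq, Pi.pow_apply] at hd
    refine hd.congr_deriv (Eq.symm ?_)
    have hode := ode_Fs hx1
    push_cast
    linear_combination (-(Fs x)) * hode

lemma Fs_ge_one {b : ℝ} (hb : b ∈ Set.Ico (0:ℝ) 1) : 1 ≤ Fs b := by
  have hs := summable_pow_of_abs_le_one hcb_abs (abs_lt_one_of_Ico hb)
  have := Summable.le_tsum hs 0 (fun k _ => mul_nonneg (cb_pos k).le (pow_nonneg hb.1 k))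
  simpa [cb_zero, Fs] using this

lemma Fs_eq {b : ℝ} (hb : b ∈ Set.Ico (0:ℝ) 1) : Fs b = 1 / Real.sqrt (1-b) := by
  have h1b : (0:ℝ) < 1 - b := by linarith [hb.2]
  have hsq : Fs b ^ 2 = 1 / (1-b) := by
    have := Fs_sq hb
    field_simp at this ⊢
    linarith
  have h0 : 0 ≤ Fs b := le_trans zero_le_one (Fs_ge_one hb)
  rw [← Real.sqrt_sq h0, hsq, one_div, one_div, Real.sqrt_inv]

noncomputable def cg (k : ℕ) : ℝ := cb k / k
noncomputable def Gs (x : ℝ) : ℝ := ∑' k, cg k * x ^ k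
noncomputable def E1 (x : ℝ) : ℝ := ∑' k, cb (k+1) * x ^ k

lemma hcg_abs : ∀ k, |cg k| ≤ 1 := by
  intro k
  cases k with
  | zero => simp [cg]
  | succ n =>
    rw [cg, abs_div, abs_of_pos (cb_pos _), Nat.abs_cast]
    apply div_le_one_of_le₀ _ (Nat.cast_nonneg _)
    calc cb (n+1) ≤ 1 := cb_le_one _
      _ ≤ ((n+1 : ℕ) : ℝ) := by exact_mod_cast Nat.one_le_iff_ne_zero.mpr (Nat.succ_ne_zero n)

lemma summable_E1 {x : ℝ} (hx : |x| < 1) : Summable (fun k => cb (k+1) * x ^ k) :=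
  summable_pow_of_abs_le_one (fun k => hcb_abs (k+1)) hx

lemma hasDerivAt_Gs {x : ℝ} (hx : |x| < 1) : HasDerivAt Gs (E1 x) x := by
  refine hasDerivAt_tsum_pow' hcg_abs hx ?_
  refine ((summable_E1 hx).hasSum).congr_fun fun k => ?_
  rw [cg]
  have : ((k+1 : ℕ) : ℝ) ≠ 0 := by positivity
  push_cast at this ⊢
  field_simp

lemma E1_shift {x : ℝ} (hx : |x| < 1) : x * E1 x = Fs x - 1 := by
  have h := hasSum_shift (c := cb) ((summable_E1 hx).hasSum)
  have := (hasSum_Fs hx).unique h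
  rw [cb_zero] at this
  rw [E1]
  linarith

lemma sqrt_lt_one {x : ℝ} (hx : x ∈ Set.Ico (0:ℝ) 1) (hx0 : 0 < x) :
    Real.sqrt (1-x) < 1 := by
  have := Real.sqrt_lt_sqrt (by linarith [hx.2] : (0:ℝ) ≤ 1-x) (by linarith : 1-x < 1)
  simpa using this

lemma E1_eq {x : ℝ} (hx : x ∈ Set.Ico (0:ℝ) 1) :
    E1 x = 1 / (Real.sqrt (1-x) * (1 + Real.sqrt (1-x))) := by
  rcases eq_or_lt_of_le hx.1 with h0 | h0
  · rw [← h0, E1, tsum_pow_zero (fun k => cb (k+1)), cb_one]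
    norm_num
  set u := Real.sqrt (1-x) with hu
  have h1x : (0:ℝ) < 1 - x := by linarith [hx.2]
  have hupos : 0 < u := Real.sqrt_pos.mpr h1x
  have hu2 : u ^ 2 = 1 - x := Real.sq_sqrt h1x.le
  · have hult : u < 1 := sqrt_lt_one hx h0
    have hx1 := abs_lt_one_of_Ico hx
    have h := E1_shift hx1
    rw [Fs_eq hx, ← hu] at h
    have h' : u * (x * E1 x) = 1 - u := by
      rw [h]; field_simp
    rw [eq_div_iff (by positivity)]
    have h5 : E1 x * (u * (1 + u)) * (1 - u) = 1 * (1 - u) := by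
      linear_combination h' - (E1 x * u) * hu2
    exact mul_right_cancel₀ (by linarith : (1:ℝ) - u ≠ 0) h5

noncomputable def Gfun (x : ℝ) : ℝ := 2 * (Real.log 2 - Real.log (1 + Real.sqrt (1-x)))

lemma hasDerivAt_sqrt1m {x : ℝ} (hx : x < 1) :
    HasDerivAt (fun y => Real.sqrt (1-y)) (-(1/(2 * Real.sqrt (1-x)))) x := by
  have h1 : HasDerivAt (fun y : ℝ => 1 - y) (-1) x := by
    simpa using (hasDerivAt_id x).const_sub (1:ℝ)
  have h2 := (Real.hasDerivAt_sqrt (by linarith : 1 - x ≠ 0)).comp x h1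
  refine h2.congr_deriv (Eq.symm ?_)
  ring

lemma hasDerivAt_wfun {x : ℝ} (hx : x < 1) :
    HasDerivAt (fun y => Real.log 2 - Real.log (1 + Real.sqrt (1-y)))
      (1 / (2 * Real.sqrt (1-x) * (1 + Real.sqrt (1-x)))) x := by
  have h1x : (0:ℝ) < 1 - x := by linarith
  have hupos : 0 < Real.sqrt (1-x) := Real.sqrt_pos.mpr h1x
  have h1 : HasDerivAt (fun y : ℝ => 1 + Real.sqrt (1-y)) (-(1/(2 * Real.sqrt (1-x)))) x := by
    simpa using (hasDerivAt_sqrt1m hx).const_add (1:ℝ)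
  have h2 := (Real.hasDerivAt_log (by positivity : 1 + Real.sqrt (1-x) ≠ 0)).comp x h1
  have h3 := h2.const_sub (Real.log 2)
  refine h3.congr_deriv (Eq.symm ?_)
  field_simp

lemma hasDerivAt_Gfun {x : ℝ} (hx : x ∈ Set.Ico (0:ℝ) 1) : HasDerivAt Gfun (E1 x) x := by
  have h1x : (0:ℝ) < 1 - x := by linarith [hx.2]
  have hupos : 0 < Real.sqrt (1-x) := Real.sqrt_pos.mpr h1x
  have h := (hasDerivAt_wfun hx.2).const_mul 2
  rw [E1_eq hx]
  refine h.congr_deriv (Eq.symm ?_)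
  field_simp

lemma Gs_zero : Gs 0 = 0 := by
  rw [Gs, tsum_pow_zero]
  simp [cg]

lemma Gs_eq_Gfun {b : ℝ} (hb : b ∈ Set.Ico (0:ℝ) 1) : Gs b = Gfun b := by
  have h := eq_at_zero_of_deriv_zero (f := fun x => Gs x - Gfun x) hb ?_
  · have hG0 : Gfun 0 = 0 := by
      unfold Gfun
      norm_num
    simp only [Gs_zero, hG0] at h
    linarith
  · intro x hx
    have := (hasDerivAt_Gs (abs_lt_one_of_Ico hx)).sub (hasDerivAt_Gfun hx)
    rw [sub_self] at this; exact this

noncomputable def ch (k : ℕ) : ℝ := cb k / (k:ℝ)^2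
noncomputable def Hs (x : ℝ) : ℝ := ∑' k, ch k * x ^ k
noncomputable def E2 (x : ℝ) : ℝ := ∑' k, (cb (k+1) / ((k:ℝ)+1)) * x ^ k

lemma hch_abs : ∀ k, |ch k| ≤ 1 := by
  intro k
  cases k with
  | zero => simp [ch]
  | succ n =>
    rw [ch, abs_div, abs_of_pos (cb_pos _), abs_of_pos (by positivity : (0:ℝ) < ((n+1:ℕ):ℝ)^2)]
    apply div_le_one_of_le₀ _ (by positivity)
    calc cb (n+1) ≤ 1 := cb_le_one _
      _ ≤ ((n+1 : ℕ) : ℝ)^2 := by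
          have : (1:ℝ) ≤ ((n+1 : ℕ) : ℝ) := by exact_mod_cast Nat.one_le_iff_ne_zero.mpr (Nat.succ_ne_zero n)
          nlinarith

lemma summable_E2 {x : ℝ} (hx : |x| < 1) :
    Summable (fun k => (cb (k+1) / ((k:ℝ)+1)) * x ^ k) := by
  refine summable_pow_of_abs_le_one (fun k => ?_) hx
  rw [abs_div, abs_of_pos (cb_pos _), abs_of_pos (by positivity : (0:ℝ) < (k:ℝ)+1)]
  apply div_le_one_of_le₀ _ (by positivity)
  calc cb (k+1) ≤ 1 := cb_le_one _
    _ ≤ (k:ℝ)+1 := by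
        have : (0:ℝ) ≤ (k:ℝ) := Nat.cast_nonneg k
        linarith

lemma hasDerivAt_Hs {x : ℝ} (hx : |x| < 1) : HasDerivAt Hs (E2 x) x := by
  refine hasDerivAt_tsum_pow' hch_abs hx ?_
  refine ((summable_E2 hx).hasSum).congr_fun fun k => ?_
  rw [ch]
  have : ((k+1 : ℕ) : ℝ) ≠ 0 := by positivity
  push_cast at this ⊢
  field_simp

lemma E2_shift {x : ℝ} (hx : |x| < 1) : x * E2 x = Gs x := by
  have hsum : HasSum (fun k => cg (k+1) * x ^ k) (E2 x) := by
    refine ((summable_E2 hx).hasSum).congr_fun fun k => ?_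
    rw [cg]
    push_cast
    ring
  have h := hasSum_shift (c := cg) hsum
  have := ((summable_pow_of_abs_le_one hcg_abs hx).hasSum).unique h
  have hcg0 : cg 0 = 0 := by simp [cg]
  rw [hcg0] at this
  rw [Gs]
  linarith

noncomputable def Lf (y : ℝ) : ℝ := ∑' k : ℕ, (1/(k:ℝ)^2) * y ^ k
noncomputable def DL (y : ℝ) : ℝ := ∑' k : ℕ, (1/((k:ℝ)+1)) * y ^ k

lemma hl_abs : ∀ k : ℕ, |1/((k:ℝ))^2| ≤ 1 := by
  intro k
  cases k with
  | zero => simp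
  | succ n =>
    rw [abs_of_pos (by positivity : (0:ℝ) < 1/((n+1:ℕ):ℝ)^2)]
    rw [div_le_one (by positivity)]
    have : (1:ℝ) ≤ ((n+1 : ℕ) : ℝ) := by exact_mod_cast Nat.one_le_iff_ne_zero.mpr (Nat.succ_ne_zero n)
    nlinarith

lemma summable_DL {y : ℝ} (hy : |y| < 1) : Summable (fun k : ℕ => (1/((k:ℝ)+1)) * y ^ k) := by
  refine summable_pow_of_abs_le_one (fun k => ?_) hy
  rw [abs_of_pos (by positivity : (0:ℝ) < 1/((k:ℝ)+1))]
  rw [div_le_one (by positivity)]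
  have : (0:ℝ) ≤ (k:ℝ) := Nat.cast_nonneg k
  linarith

lemma hasDerivAt_Lf {y : ℝ} (hy : |y| < 1) : HasDerivAt Lf (DL y) y := by
  refine hasDerivAt_tsum_pow' hl_abs hy ?_
  refine ((summable_DL hy).hasSum).congr_fun fun k => ?_
  have : ((k+1 : ℕ) : ℝ) ≠ 0 := by positivity
  push_cast at this ⊢
  field_simp

lemma DL_zero : DL 0 = 1 := by
  rw [DL, tsum_pow_zero (fun k => 1/((k:ℝ)+1))]
  norm_num

lemma DL_eq {y : ℝ} (hy : |y| < 1) (hy0 : y ≠ 0) : DL y = -Real.log (1-y) / y := by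
  have h := hasSum_pow_div_log_of_abs_lt_one hy
  have h2 : HasSum (fun k : ℕ => (1/((k:ℝ)+1)) * y ^ k) (-Real.log (1-y) / y) := by
    refine ((h.div_const y)).congr_fun fun k => ?_
    field_simp
    ring
  rw [DL, h2.tsum_eq]

noncomputable def Rfun (x : ℝ) : ℝ :=
  2 * Lf ((1 - Real.sqrt (1-x))/2) - (Real.log 2 - Real.log (1 + Real.sqrt (1-x)))^2

lemma sqrt_le_one {x : ℝ} (hx0 : 0 ≤ x) : Real.sqrt (1-x) ≤ 1 := by
  have := Real.sqrt_le_sqrt (by linarith : 1-x ≤ 1)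
  simpa using this

lemma hasDerivAt_Rfun {x : ℝ} (hx : x ∈ Set.Ico (0:ℝ) 1) : HasDerivAt Rfun (E2 x) x := by
  have h1x : (0:ℝ) < 1 - x := by linarith [hx.2]
  set u := Real.sqrt (1-x) with hu
  have hupos : 0 < u := Real.sqrt_pos.mpr h1x
  have hule : u ≤ 1 := sqrt_le_one hx.1
  have hu2 : u ^ 2 = 1 - x := Real.sq_sqrt h1x.le
  set s := (1 - u)/2 with hs
  have hs0 : 0 ≤ s := by rw [hs]; linarith
  have hsabs : |s| < 1 := by rw [abs_of_nonneg hs0, hs]; linarith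
  have h_s : HasDerivAt (fun y => (1 - Real.sqrt (1-y))/2) (1/(4*u)) x := by
    have := ((hasDerivAt_sqrt1m hx.2).const_sub (1:ℝ)).div_const 2
    refine this.congr_deriv (Eq.symm ?_)
    rw [← hu]
    field_simp
    ring
  have h_L := (hasDerivAt_Lf hsabs).comp x h_s
  have h_w2 := (hasDerivAt_wfun hx.2).pow 2
  have total := (h_L.const_mul 2).sub h_w2
  rw [← hu] at total
  simp only [Function.comp] at total
  have total' : HasDerivAt Rfun
      (2 * (DL s * (1 / (4 * u))) - (2:ℕ) * (Real.log 2 - Real.log (1 + u)) ^ (2-1) * (1 / (2 * u * (1 + u)))) x := total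
  convert total' using 1
  set w := Real.log 2 - Real.log (1 + u) with hw
  rcases eq_or_lt_of_le hx.1 with h0 | h0
  · have hx0 : x = 0 := h0.symm
    subst hx0
    have hu1 : u = 1 := by rw [hu]; simp
    have hs0' : s = 0 := by rw [hs, hu1]; ring
    have hw0 : w = 0 := by rw [hw, hu1]; norm_num
    rw [hs0', DL_zero, hw0, hu1]
    rw [E2, tsum_pow_zero (fun k => cb (k+1) / ((k:ℝ)+1)), cb_one]
    norm_num
  · have hult : u < 1 := sqrt_lt_one hx h0
    have hspos : 0 < s := by rw [hs]; linarith
    have hDL : DL s = w / s := by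
      rw [DL_eq hsabs hspos.ne']
      congr 1
      rw [hs, show (1:ℝ) - (1-u)/2 = (1+u)/2 by ring]
      rw [Real.log_div (by positivity) (by norm_num), hw]
      ring
    have hE2 : x * E2 x = 2 * w := by
      rw [E2_shift (abs_lt_one_of_Ico hx), Gs_eq_Gfun hx, Gfun, ← hu, ← hw]
    rw [hDL]
    have hx0 : x ≠ 0 := h0.ne'
    have h1u : (0:ℝ) < 1 + u := by linarith
    field_simp
    rw [hs]
    linear_combination (-(4*u*(E2 x)))*hu2 + (4*u)*hE2

lemma Hs_eq_Rfun {b : ℝ} (hb : b ∈ Set.Ico (0:ℝ) 1) : Hs b = Rfun b := by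
  have h := eq_at_zero_of_deriv_zero (f := fun x => Hs x - Rfun x) hb ?_
  · have hHs0 : Hs 0 = 0 := by
      rw [Hs, tsum_pow_zero]; simp [ch]
    have hLf0 : Lf 0 = 0 := by
      rw [Lf, tsum_pow_zero (fun k => 1/(k:ℝ)^2)]
      norm_num
    have hR0 : Rfun 0 = 0 := by
      unfold Rfun
      norm_num [hLf0]
    simp only [hHs0, hR0] at h
    linarith
  · intro x hx
    have := (hasDerivAt_Hs (abs_lt_one_of_Ico hx)).sub (hasDerivAt_Rfun hx)
    rw [sub_self] at this; exact this

lemma tendsto_tsum_pow_atOne {c : ℕ → ℝ} (hc0 : ∀ k, 0 ≤ c k) (hs : Summable c) :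
    Tendsto (fun x => ∑' k, c k * x ^ k) (𝓝[<] (1:ℝ)) (𝓝 (∑' k, c k)) := by
  have hIoo : Set.Ioo (0:ℝ) 1 ∈ 𝓝[<] (1:ℝ) :=
    Ioo_mem_nhdsLT_of_mem (by norm_num : (1:ℝ) ∈ Set.Ioc (0:ℝ) 1)
  have hsx : ∀ x : ℝ, |x| ≤ 1 → Summable (fun k => c k * x ^ k) := by
    intro x hx
    refine Summable.of_norm_bounded hs fun k => ?_
    rw [Real.norm_eq_abs, abs_mul, abs_pow, abs_of_nonneg (hc0 k)]
    calc c k * |x| ^ k ≤ c k * 1 ^ k := by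
          apply mul_le_mul_of_nonneg_left _ (hc0 k)
          exact pow_le_pow_left₀ (abs_nonneg x) hx k
      _ = c k := by simp
  refine tendsto_order.2 ⟨fun a ha => ?_, fun b hb => ?_⟩
  · have hps := hs.hasSum.tendsto_sum_nat
    obtain ⟨N, hN⟩ := ((tendsto_order.1 hps).1 a ha).exists
    have hcont : Tendsto (fun x : ℝ => ∑ k ∈ Finset.range N, c k * x ^ k) (𝓝[<] (1:ℝ))
        (𝓝 (∑ k ∈ Finset.range N, c k)) := by
      have hc : Continuous (fun x : ℝ => ∑ k ∈ Finset.range N, c k * x ^ k) :=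
        continuous_finset_sum _ (fun k _ => (continuous_const.mul (continuous_pow k) : Continuous fun x : ℝ => c k * x ^ k))
      have := hc.tendsto 1
      simp only [one_pow, mul_one] at this
      exact this.mono_left nhdsWithin_le_nhds
    have hev := (tendsto_order.1 hcont).1 a hN
    filter_upwards [hev, hIoo] with x hx1 hx2
    refine lt_of_lt_of_le hx1 ?_
    apply Summable.sum_le_tsum
    · intro k _
      exact mul_nonneg (hc0 k) (pow_nonneg hx2.1.le k)
    · exact hsx x (by rw [abs_of_nonneg hx2.1.le]; exact hx2.2.le)
  · filter_upwards [hIoo] with x hx2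
    refine lt_of_le_of_lt ?_ hb
    apply Summable.tsum_le_tsum _ _ hs
    · intro k
      calc c k * x ^ k ≤ c k * 1 := by
            apply mul_le_mul_of_nonneg_left _ (hc0 k)
            exact pow_le_one₀ hx2.1.le hx2.2.le
        _ = c k := mul_one _
    · exact hsx x (by rw [abs_of_nonneg hx2.1.le]; exact hx2.2.le)

lemma eq_of_deriv_zero_Ioo {f : ℝ → ℝ} {a b : ℝ} (ha : a ∈ Set.Ioo (0:ℝ) 1)
    (hb : b ∈ Set.Ioo (0:ℝ) 1) (hab : a ≤ b)
    (hf : ∀ x ∈ Set.Ioo (0:ℝ) 1, HasDerivAt f 0 x) : f b = f a := by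
  exact constant_of_has_deriv_right_zero (f := f) (a := a) (b := b)
    (fun x hx => (hf x ⟨lt_of_lt_of_le ha.1 hx.1, lt_of_le_of_lt hx.2 hb.2⟩).continuousAt.continuousWithinAt)
    (fun x hx => (hf x ⟨lt_of_lt_of_le ha.1 hx.1, lt_trans hx.2 hb.2⟩).hasDerivWithinAt)
    b ⟨hab, le_refl b⟩

noncomputable def phi (y : ℝ) : ℝ := Lf y + Lf (1-y) + Real.log y * Real.log (1-y)

lemma hasDerivAt_phi {y : ℝ} (hy : y ∈ Set.Ioo (0:ℝ) 1) : HasDerivAt phi 0 y := by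
  have hy0 : 0 < y := hy.1
  have hy1 : y < 1 := hy.2
  have h1y : 0 < 1 - y := by linarith
  have hyabs : |y| < 1 := by rw [abs_of_pos hy0]; exact hy1
  have h1yabs : |1-y| < 1 := by rw [abs_of_pos h1y]; linarith
  have hneg : HasDerivAt (fun z : ℝ => 1 - z) (-1) y := by
    simpa using (hasDerivAt_id y).const_sub (1:ℝ)
  have h1 : HasDerivAt Lf (-Real.log (1-y)/y) y := by
    have := hasDerivAt_Lf hyabs
    rwa [DL_eq hyabs hy0.ne'] at this
  have h2 : HasDerivAt (fun z => Lf (1-z)) (Real.log y/(1-y)) y := by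
    have hL := hasDerivAt_Lf h1yabs
    rw [DL_eq h1yabs h1y.ne'] at hL
    have := hL.comp y hneg
    refine this.congr_deriv (Eq.symm ?_)
    rw [show (1:ℝ) - (1-y) = y by ring]
    field_simp
  have h3 : HasDerivAt (fun z => Real.log z * Real.log (1-z))
      ((1/y) * Real.log (1-y) + Real.log y * (-(1/(1-y)))) y := by
    have hlog1 := Real.hasDerivAt_log hy0.ne'
    have hlog2 : HasDerivAt (fun z : ℝ => Real.log (1-z)) (-(1/(1-y))) y := by
      have := (Real.hasDerivAt_log h1y.ne').comp y hneg
      refine this.congr_deriv (Eq.symm ?_)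
      field_simp
    have := hlog1.mul hlog2
    refine this.congr_deriv (Eq.symm ?_)
    rw [one_div]
  have total := (h1.add h2).add h3
  have : HasDerivAt phi (-Real.log (1-y)/y + Real.log y/(1-y) +
      ((1/y) * Real.log (1-y) + Real.log y * (-(1/(1-y))))) y := total
  convert this using 1
  field_simp
  ring

lemma Lf_one : Lf 1 = π^2/6 := by
  rw [Lf]
  have : (fun k : ℕ => (1/(k:ℝ)^2) * 1 ^ k) = (fun k : ℕ => 1/(k:ℝ)^2) := by
    funext k; simp
  rw [this, hasSum_zeta_two.tsum_eq]

lemma Lf_cont_atOne : Tendsto Lf (𝓝[<] (1:ℝ)) (𝓝 (π^2/6)) := by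
  have h := tendsto_tsum_pow_atOne (c := fun k : ℕ => 1/(k:ℝ)^2)
    (fun k => by positivity) (by simpa using summable_one_div_nat_pow.mpr (le_refl 2))
  have h2 : ∑' k : ℕ, 1/(k:ℝ)^2 = π^2/6 := hasSum_zeta_two.tsum_eq
  rw [h2] at h
  exact h

lemma Lf_half : Lf (1/2) = π^2/12 - (Real.log 2)^2/2 := by
  have hconst : ∀ a ∈ Set.Ioo (0:ℝ) (1/2), phi (1/2) = phi a := by
    intro a ha
    exact eq_of_deriv_zero_Ioo (a := a) (b := 1/2)
      ⟨ha.1, by linarith [ha.2]⟩ (by norm_num) ha.2.le (fun x hx => hasDerivAt_phi hx)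
  have hlim : Tendsto phi (𝓝[>] (0:ℝ)) (𝓝 (π^2/6)) := by
    have hLf0 : Tendsto Lf (𝓝[>] (0:ℝ)) (𝓝 0) := by
      have hc : ContinuousAt Lf 0 := (hasDerivAt_Lf (by norm_num : |(0:ℝ)| < 1)).continuousAt
      have hLf0v : Lf 0 = 0 := by
        rw [Lf, tsum_pow_zero (fun k => 1/(k:ℝ)^2)]; norm_num
      have := hc.tendsto
      rw [hLf0v] at this
      exact this.mono_left nhdsWithin_le_nhds
    have hmap : Tendsto (fun a : ℝ => 1 - a) (𝓝[>] (0:ℝ)) (𝓝[<] (1:ℝ)) := by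
      rw [tendsto_nhdsWithin_iff]
      constructor
      · have : Tendsto (fun a : ℝ => 1 - a) (𝓝 0) (𝓝 1) := by
          have := ((continuous_const.sub continuous_id :
            Continuous fun a : ℝ => (1:ℝ) - a)).tendsto (0:ℝ)
          simpa using (show Tendsto (fun a : ℝ => (1:ℝ) - a) (𝓝 0) (𝓝 (1 - 0)) from this)
        exact this.mono_left nhdsWithin_le_nhds
      · filter_upwards [self_mem_nhdsWithin] with a ha
        simp only [Set.mem_Iio]
        simp only [Set.mem_Ioi] at ha
        linarith
    have hLf1 : Tendsto (fun a => Lf (1-a)) (𝓝[>] (0:ℝ)) (𝓝 (π^2/6)) :=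
      Lf_cont_atOne.comp hmap
    have hloglog : Tendsto (fun a : ℝ => Real.log a * Real.log (1-a)) (𝓝[>] (0:ℝ)) (𝓝 0) := by
      have hb : ∀ᶠ a in 𝓝[>] (0:ℝ), ‖Real.log a * Real.log (1-a)‖ ≤ 2 * (-(Real.log a * a)) := by
        filter_upwards [Ioo_mem_nhdsGT_of_mem (by norm_num : (0:ℝ) ∈ Set.Ico 0 (1/2))] with a ha
        have ha0 : 0 < a := ha.1
        have ha2 : a < 1/2 := ha.2
        have hla : Real.log a < 0 := Real.log_neg ha0 (by linarith)
        have hl1a : Real.log (1-a) ≤ 0 := Real.log_nonpos (by linarith) (by linarith)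
        have hkey : -Real.log (1-a) ≤ 2*a := by
          rw [← Real.log_inv]
          have h1 : (1-a)⁻¹ ≤ 1 + 2*a := by
            rw [inv_le_iff_one_le_mul₀ (by linarith)]
            nlinarith
          calc Real.log (1-a)⁻¹ ≤ Real.log (1+2*a) := by
                apply Real.log_le_log (by rw [inv_pos]; linarith) h1
            _ ≤ 2*a := by
                have := Real.add_one_le_exp (2*a)
                have := Real.log_le_log (by linarith : (0:ℝ) < 1+2*a)
                  (by linarith [Real.add_one_le_exp (2*a)] : 1+2*a ≤ Real.exp (2*a))
                simpa [Real.log_exp] using this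
        rw [Real.norm_eq_abs, abs_mul, abs_of_neg hla, abs_of_nonpos hl1a]
        calc (-Real.log a) * (-Real.log (1-a)) ≤ (-Real.log a) * (2*a) := by
              apply mul_le_mul_of_nonneg_left hkey (by linarith)
          _ = 2 * (-(Real.log a * a)) := by ring
      have hz : Tendsto (fun a : ℝ => 2 * (-(Real.log a * a))) (𝓝[>] (0:ℝ)) (𝓝 0) := by
        have h := tendsto_log_mul_rpow_nhdsGT_zero (zero_lt_one)
        have h' : Tendsto (fun a : ℝ => Real.log a * a) (𝓝[>] (0:ℝ)) (𝓝 0) := by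
          refine h.congr' ?_
          filter_upwards [self_mem_nhdsWithin] with a ha
          rw [Real.rpow_one]
        have := (h'.neg).const_mul 2
        simpa using this
      exact squeeze_zero_norm' hb hz
    have := (hLf0.add hLf1).add hloglog
    simpa using (show Tendsto phi (𝓝[>] (0:ℝ)) _ from this)
  have hev : ∀ᶠ a in 𝓝[>] (0:ℝ), phi a = phi (1/2) := by
    filter_upwards [Ioo_mem_nhdsGT_of_mem (by norm_num : (0:ℝ) ∈ Set.Ico 0 (1/2))] with a ha
    exact (hconst a ha).symm
  have hlim2 : Tendsto phi (𝓝[>] (0:ℝ)) (𝓝 (phi (1/2))) := by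
    refine Tendsto.congr' ?_ tendsto_const_nhds
    filter_upwards [hev] with a ha using ha.symm
  have huniq := tendsto_nhds_unique hlim2 hlim
  have hphi : phi (1/2) = Lf (1/2) + Lf (1/2) + (Real.log 2)^2 := by
    rw [phi]
    norm_num
    rw [one_div, Real.log_inv]
    ring
  rw [hphi] at huniq
  linarith

lemma ch_nonneg : ∀ k, 0 ≤ ch k := fun k => div_nonneg (cb_pos k).le (sq_nonneg _)

lemma summable_ch : Summable ch := by
  have hb : Summable (fun k : ℕ => 1/(k:ℝ)^2) := by
    simpa using summable_one_div_nat_pow.mpr (le_refl 2)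
  refine Summable.of_norm_bounded hb fun k => ?_
  rw [Real.norm_eq_abs, abs_of_nonneg (ch_nonneg k)]
  cases k with
  | zero => simp [ch]
  | succ n =>
    rw [ch]
    gcongr
    exact cb_le_one _

lemma tendsto_Rfun : Tendsto Rfun (𝓝[<] (1:ℝ)) (𝓝 (2 * Lf (1/2) - (Real.log 2)^2)) := by
  have hinnerc : Continuous (fun x : ℝ => (1 - Real.sqrt (1-x))/2) :=
    (continuous_const.sub (Real.continuous_sqrt.comp (continuous_const.sub continuous_id))).div_const 2
  have hval : (fun x : ℝ => (1 - Real.sqrt (1-x))/2) 1 = 1/2 := by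
    simp only [sub_self, Real.sqrt_zero]
    norm_num
  have hLc : ContinuousAt Lf ((fun x : ℝ => (1 - Real.sqrt (1-x))/2) 1) := by
    rw [hval]
    refine (hasDerivAt_Lf ?_).continuousAt
    rw [abs_of_pos] <;> norm_num
  have hcomp : ContinuousAt (fun x : ℝ => Lf ((1 - Real.sqrt (1-x))/2)) 1 := by
    have : ContinuousAt (Lf ∘ (fun x : ℝ => (1 - Real.sqrt (1-x))/2)) 1 :=
      ContinuousAt.comp (x := (1:ℝ)) (g := Lf)
        (f := fun x : ℝ => (1 - Real.sqrt (1-x))/2) hLc hinnerc.continuousAt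
    exact this
  have hsqc : Continuous (fun x : ℝ => 1 + Real.sqrt (1-x)) :=
    continuous_const.add (Real.continuous_sqrt.comp (continuous_const.sub continuous_id))
  have hlc : ContinuousAt Real.log ((fun x : ℝ => 1 + Real.sqrt (1-x)) 1) := by
    have h10 : (fun x : ℝ => 1 + Real.sqrt (1-x)) 1 = 1 := by
      simp [sub_self, Real.sqrt_zero]
    rw [h10]
    exact Real.continuousAt_log one_ne_zero
  have hlogc : ContinuousAt (fun x : ℝ => Real.log 2 - Real.log (1 + Real.sqrt (1-x))) 1 := by
    apply continuousAt_const.sub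
    have : ContinuousAt (Real.log ∘ (fun x : ℝ => 1 + Real.sqrt (1-x))) 1 :=
      ContinuousAt.comp (x := (1:ℝ)) (g := Real.log)
        (f := fun x : ℝ => 1 + Real.sqrt (1-x)) hlc hsqc.continuousAt
    exact this
  have hRc : ContinuousAt Rfun 1 := (continuousAt_const.mul hcomp).sub (hlogc.pow 2)
  have h : Tendsto Rfun (𝓝[<] (1:ℝ)) (𝓝 (Rfun 1)) :=
    hRc.tendsto.mono_left nhdsWithin_le_nhds
  have hR1 : Rfun 1 = 2 * Lf (1/2) - (Real.log 2)^2 := by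
    unfold Rfun
    rw [sub_self, Real.sqrt_zero]
    norm_num
  rwa [hR1] at h

lemma S_val : ∑' k, ch k = π^2/6 - 2*(Real.log 2)^2 := by
  have h1 : Tendsto Hs (𝓝[<] (1:ℝ)) (𝓝 (∑' k, ch k)) :=
    tendsto_tsum_pow_atOne ch_nonneg summable_ch
  have hev : ∀ᶠ x in 𝓝[<] (1:ℝ), Hs x = Rfun x := by
    filter_upwards [Ioo_mem_nhdsLT_of_mem (by norm_num : (1:ℝ) ∈ Set.Ioc (0:ℝ) 1)] with x hx
    exact Hs_eq_Rfun ⟨hx.1.le, hx.2⟩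
  have := tendsto_nhds_unique (h1.congr' hev) tendsto_Rfun
  rw [this, Lf_half]
  ring

theorem stmt_1 :
    ((∑' k : ℕ, (1/((k:ℝ)+1)^2) * cb (k+1) : ℝ) : ℂ)
      = riemannZeta 2 - 2 * (Real.log 2)^2 := by
  have hch0 : ch 0 = 0 := by simp [ch]
  have hsum : HasSum (fun k => ch (k+1)) (∑' k, ch k) := by
    have := (hasSum_nat_add_iff' (f := ch) 1).mpr summable_ch.hasSum
    simpa [hch0] using this
  have hT : (∑' k : ℕ, (1/((k:ℝ)+1)^2) * cb (k+1)) = π^2/6 - 2*(Real.log 2)^2 := by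
    rw [← S_val, ← hsum.tsum_eq]
    apply tsum_congr
    intro k
    rw [ch]
    push_cast
    ring
  rw [hT, riemannZeta_two]
  push_cast
  ring
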